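/- arXiv:2107.12084 — 4 statements merged into one kernel-verified Lean document; each statement's English description precedes it below -/
import Mathlib

section
/- Let ȳ ∈ WMax(H_F(x̄),K), where H_F(x̄) := F(x̄) − K, and suppose H_F(x̄) is a convex and K-upper bounded set. Then g_{u,x̄} is convex, finite and continuous on Y, and its convex subdifferential at ȳ satisfies ∂g_{u,x̄}(ȳ) = ∂Ψ_e(0) ∩ N(ȳ, H_F(x̄)), where N(ȳ, C) := {y* ∈ Y* : ⟨y*, y − ȳ⟩ ≤ 0 for all y ∈ C} is the normal cone of convex analysis. -/
open Set Topology Metric Pointwise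

/-- The Gerstewitz (Tammer) scalarizing functional `Ψ_e(y) = inf {t : y ∈ t•e - K}`. -/
noncomputable def psiE {Y : Type*} [NormedAddCommGroup Y] [NormedSpace ℝ Y]
    (K : Set Y) (e : Y) (y : Y) : ℝ :=
  sInf {t : ℝ | t • e - y ∈ K}

/-- The lower inner function `g_l(x,z) = inf_{y ∈ F x} Ψ_e (y - z)` (with values in `EReal`). -/
noncomputable def glow {X Y : Type*} [NormedAddCommGroup X] [NormedSpace ℝ X]
    [NormedAddCommGroup Y] [NormedSpace ℝ Y]
    (K : Set Y) (e : Y) (F : X → Set Y) (x : X) (z : Y) : EReal :=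
  ⨅ y ∈ F x, (psiE K e (y - z) : EReal)

/-- The upper inner function `g_{u,x̄}(y) = inf_{ȳ ∈ F x̄} Ψ_e (y - ȳ)`. -/
noncomputable def gupp {X Y : Type*} [NormedAddCommGroup X] [NormedSpace ℝ X]
    [NormedAddCommGroup Y] [NormedSpace ℝ Y]
    (K : Set Y) (e : Y) (F : X → Set Y) (xbar : X) (y : Y) : EReal :=
  ⨅ yb ∈ F xbar, (psiE K e (y - yb) : EReal)

/-- The lower scalarizing functional `f_{l,x̄}(x) = sup_{ȳ ∈ F x̄} g_l(x, ȳ)`. -/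
noncomputable def flow {X Y : Type*} [NormedAddCommGroup X] [NormedSpace ℝ X]
    [NormedAddCommGroup Y] [NormedSpace ℝ Y]
    (K : Set Y) (e : Y) (F : X → Set Y) (xbar : X) (x : X) : EReal :=
  ⨆ yb ∈ F xbar, glow K e F x yb

/-- The upper scalarizing functional `f_{u,x̄}(x) = sup_{y ∈ F x} g_{u,x̄}(y)`. -/
noncomputable def fupp {X Y : Type*} [NormedAddCommGroup X] [NormedSpace ℝ X]
    [NormedAddCommGroup Y] [NormedSpace ℝ Y]
    (K : Set Y) (e : Y) (F : X → Set Y) (xbar : X) (x : X) : EReal :=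
  ⨆ y ∈ F x, gupp K e F xbar y

/-- Weakly minimal elements: `WMin(A,K) = {a ∈ A : (a - int K) ∩ A = ∅}`. -/
def wMinSet {Y : Type*} [NormedAddCommGroup Y] (A K : Set Y) : Set Y :=
  {a ∈ A | ∀ b ∈ A, a - b ∉ interior K}

/-- Weakly maximal elements: `WMax(A,K) = {a ∈ A : (a + int K) ∩ A = ∅}`. -/
def wMaxSet {Y : Type*} [NormedAddCommGroup Y] (A K : Set Y) : Set Y :=
  {a ∈ A | ∀ b ∈ A, b - a ∉ interior K}

/-- Minimal elements: `Min(A,K) = {a ∈ A : (a - K) ∩ A = {a}}`. -/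
def minSet {Y : Type*} [AddGroup Y] (A K : Set Y) : Set Y :=
  {a ∈ A | ∀ b ∈ A, a - b ∈ K → b = a}

/- ## Auxiliary lemmas -/

lemma real_le_of_forall_pos {a b : ℝ} (h : ∀ ε : ℝ, 0 < ε → a ≤ b + ε) : a ≤ b := by
  by_contra hab
  push_neg at hab
  linarith [h ((a - b) / 2) (by linarith)]

lemma biInf_coe {α : Type*} {s : Set α} (f : α → ℝ) (hs : s.Nonempty)
    (hbdd : BddBelow (f '' s)) :
    ⨅ a ∈ s, ((f a : ℝ) : EReal) = ((sInf (f '' s) : ℝ) : EReal) := by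
  apply le_antisymm
  · refine le_of_not_gt fun hlt => ?_
    obtain ⟨q, hq1, hq2⟩ := EReal.lt_iff_exists_real_btwn.1 hlt
    have hq : sInf (f '' s) < q := EReal.coe_lt_coe_iff.1 hq1
    obtain ⟨b, ⟨a, ha, rfl⟩, hb⟩ := (csInf_lt_iff hbdd (hs.image f)).1 hq
    have hle : (⨅ a ∈ s, ((f a : ℝ) : EReal)) ≤ ((f a : ℝ) : EReal) := biInf_le _ ha
    exact absurd (hle.trans_lt (EReal.coe_lt_coe_iff.2 hb)) (not_lt.2 hq2.le)
  · exact le_iInf₂ fun a ha => EReal.coe_le_coe_iff.2 (csInf_le hbdd ⟨a, ha, rfl⟩)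

section Psi
variable {Y : Type*} [NormedAddCommGroup Y] [NormedSpace ℝ Y]
variable {K : Set Y} {e : Y} {r : ℝ}
variable (hKcl : IsClosed K) (hKcv : Convex ℝ K)
    (hKcone : ∀ t : ℝ, 0 ≤ t → ∀ y ∈ K, t • y ∈ K)
    (hKpt : K ∩ (-K) = {0}) (hr : 0 < r) (hball : ball e r ⊆ K) (hene : e ≠ 0)

set_option linter.unusedSectionVars false

include hKcl hKcv hKcone hKpt hr hball hene

lemma K_add (a b : Y) (ha : a ∈ K) (hb : b ∈ K) : a + b ∈ K := by
  have h2 : ((2:ℝ)) • ((1/2 : ℝ) • a + (1/2 : ℝ) • b) ∈ K := by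
    apply hKcone 2 (by norm_num)
    exact hKcv ha hb (by norm_num) (by norm_num) (by norm_num)
  have : ((2:ℝ)) • ((1/2 : ℝ) • a + (1/2 : ℝ) • b) = a + b := by
    rw [smul_add, smul_smul, smul_smul]; norm_num
  rwa [this] at h2

lemma K_zero : (0:Y) ∈ K := by
  have := hKcone 0 le_rfl e (hball (mem_ball_self hr))
  simpa using this

lemma neg_e_notMem : -e ∉ K := by
  intro hne
  have heK : e ∈ K := hball (mem_ball_self hr)
  have : e ∈ K ∩ (-K) := ⟨heK, by simpa using hne⟩
  rw [hKpt] at this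
  exact hene (by simpa using this)

lemma psiSet_mem_of_gt {y : Y} {t : ℝ} (ht : ‖y‖ / r < t) : t • e - y ∈ K := by
  have ht0 : 0 < t := lt_of_le_of_lt (div_nonneg (norm_nonneg y) hr.le) ht
  have : t • e - y = t • (e - t⁻¹ • y) := by
    rw [smul_sub, smul_smul, mul_inv_cancel₀ ht0.ne', one_smul]
  rw [this]
  apply hKcone t ht0.le
  apply hball
  rw [mem_ball_iff_norm']
  have : ‖e - (e - t⁻¹ • y)‖ = ‖y‖ / t := by
    simp [norm_smul, abs_of_pos ht0, div_eq_inv_mul]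
  rw [this, div_lt_iff₀ ht0]
  rw [div_lt_iff₀ hr] at ht
  nlinarith [norm_nonneg y]

lemma psiSet_nonempty (y : Y) : {t : ℝ | t • e - y ∈ K}.Nonempty :=
  ⟨‖y‖ / r + 1, psiSet_mem_of_gt hKcl hKcv hKcone hKpt hr hball hene (lt_add_one _)⟩

lemma psiSet_bddBelow (y : Y) : BddBelow {t : ℝ | t • e - y ∈ K} := by
  refine ⟨-(‖-y‖ / r + 1), fun s hs => ?_⟩
  by_contra hlt
  push_neg at hlt
  set t0 : ℝ := ‖-y‖ / r + 1 with ht0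
  have h1 : t0 • e - (-y) ∈ K := psiSet_mem_of_gt hKcl hKcv hKcone hKpt hr hball hene (lt_add_one _)
  clear_value t0
  have hsum : (s + t0) • e ∈ K := by
    have := K_add hKcl hKcv hKcone hKpt hr hball hene (s • e - y) (t0 • e - (-y)) hs h1
    have heq : s • e - y + (t0 • e - -y) = (s + t0) • e := by
      rw [add_smul]; abel
    rwa [heq] at this
  have hst : s + t0 < 0 := by linarith
  have : -e ∈ K := by
    have := hKcone (-(s+t0))⁻¹ (inv_nonneg.2 (by linarith)) _ hsum
    rwa [smul_smul, inv_neg, neg_mul, inv_mul_cancel₀ hst.ne, neg_one_smul] at this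
  exact neg_e_notMem hKcl hKcv hKcone hKpt hr hball hene this

lemma psi_mem (y : Y) : psiE K e y • e - y ∈ K := by
  have hcl : IsClosed {t : ℝ | t • e - y ∈ K} :=
    hKcl.preimage (by continuity)
  exact hcl.csInf_mem (psiSet_nonempty hKcl hKcv hKcone hKpt hr hball hene y)
    (psiSet_bddBelow hKcl hKcv hKcone hKpt hr hball hene y)

lemma psi_le {y : Y} {t : ℝ} (ht : t • e - y ∈ K) : psiE K e y ≤ t :=
  csInf_le (psiSet_bddBelow hKcl hKcv hKcone hKpt hr hball hene y) ht

lemma psi_mono {y y' : Y} (h : y' - y ∈ K) : psiE K e y ≤ psiE K e y' := by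
  apply psi_le hKcl hKcv hKcone hKpt hr hball hene
  have := K_add hKcl hKcv hKcone hKpt hr hball hene _ _
    (psi_mem hKcl hKcv hKcone hKpt hr hball hene y') h
  have heq : psiE K e y' • e - y' + (y' - y) = psiE K e y' • e - y := by abel
  rwa [heq] at this

lemma psi_zero : psiE K e (0:Y) = 0 := by
  have hle : psiE K e (0:Y) ≤ 0 := by
    apply psi_le hKcl hKcv hKcone hKpt hr hball hene
    simpa using K_zero hKcl hKcv hKcone hKpt hr hball hene
  rcases lt_or_eq_of_le hle with hlt | h
  · exfalso
    have hm := psi_mem hKcl hKcv hKcone hKpt hr hball hene (0:Y)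
    rw [sub_zero] at hm
    have := hKcone (-(psiE K e (0:Y)))⁻¹ (inv_nonneg.2 (by linarith)) _ hm
    rw [smul_smul, inv_neg, neg_mul, inv_mul_cancel₀ hlt.ne, neg_one_smul] at this
    exact neg_e_notMem hKcl hKcv hKcone hKpt hr hball hene this
  · exact h

lemma psi_add_smul (y : Y) (t : ℝ) : psiE K e (y + t • e) = psiE K e y + t := by
  have h1 : ∀ z : Y, ∀ s : ℝ, psiE K e (z + s • e) ≤ psiE K e z + s := by
    intro z s
    apply psi_le hKcl hKcv hKcone hKpt hr hball hene
    have := psi_mem hKcl hKcv hKcone hKpt hr hball hene z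
    have heq : (psiE K e z + s) • e - (z + s • e) = psiE K e z • e - z := by
      rw [add_smul]; abel
    rwa [heq]
  have h2 := h1 (y + t • e) (-t)
  have heq : y + t • e + (-t) • e = y := by rw [neg_smul]; abel
  rw [heq] at h2
  have h3 := h1 y t
  linarith

lemma psi_combo {y₁ y₂ : Y} {a b : ℝ} (ha : 0 ≤ a) (hb : 0 ≤ b) (hab : a + b = 1) :
    psiE K e (a • y₁ + b • y₂) ≤ a * psiE K e y₁ + b * psiE K e y₂ := by
  apply psi_le hKcl hKcv hKcone hKpt hr hball hene
  have h1 := hKcone a ha _ (psi_mem hKcl hKcv hKcone hKpt hr hball hene y₁)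
  have h2 := hKcone b hb _ (psi_mem hKcl hKcv hKcone hKpt hr hball hene y₂)
  have := K_add hKcl hKcv hKcone hKpt hr hball hene _ _ h1 h2
  have heq : a • (psiE K e y₁ • e - y₁) + b • (psiE K e y₂ • e - y₂)
      = (a * psiE K e y₁ + b * psiE K e y₂) • e - (a • y₁ + b • y₂) := by
    rw [smul_sub, smul_sub, smul_smul, smul_smul, add_smul]; abel
  rwa [heq] at this

lemma psi_le_norm (y : Y) : psiE K e y ≤ ‖y‖ / r := by
  by_contra h
  push_neg at h
  have : psiE K e y ≤ (‖y‖ / r + psiE K e y) / 2 := by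
    apply psi_le hKcl hKcv hKcone hKpt hr hball hene
    exact psiSet_mem_of_gt hKcl hKcv hKcone hKpt hr hball hene (by linarith)
  linarith

lemma psi_sub_le (y y' : Y) : psiE K e y' ≤ psiE K e y + ‖y' - y‖ / r := by
  have h1 : psiE K e y' ≤ psiE K e (y + (psiE K e (y' - y)) • e) := by
    apply psi_mono hKcl hKcv hKcone hKpt hr hball hene
    have := psi_mem hKcl hKcv hKcone hKpt hr hball hene (y' - y)
    have heq : psiE K e (y' - y) • e - (y' - y) = y + psiE K e (y' - y) • e - y' := by abel
    rwa [heq] at this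
  rw [psi_add_smul hKcl hKcv hKcone hKpt hr hball hene] at h1
  have := psi_le_norm hKcl hKcv hKcone hKpt hr hball hene (y' - y)
  linarith

end Psi

lemma add_smul_mem_interior {Y : Type*} [NormedAddCommGroup Y] [NormedSpace ℝ Y]
    {K : Set Y} {e : Y} {r : ℝ}
    (hKcv : Convex ℝ K) (hKcone : ∀ t : ℝ, 0 ≤ t → ∀ y ∈ K, t • y ∈ K)
    (hr : 0 < r) (hball : ball e r ⊆ K)
    {k : Y} (hk : k ∈ K) {s : ℝ} (hs : 0 < s) : k + s • e ∈ interior K := by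
  have hK_add : ∀ a b : Y, a ∈ K → b ∈ K → a + b ∈ K := by
    intro a b ha hb
    have h2 : ((2:ℝ)) • ((1/2 : ℝ) • a + (1/2 : ℝ) • b) ∈ K := by
      apply hKcone 2 (by norm_num)
      exact hKcv ha hb (by norm_num) (by norm_num) (by norm_num)
    have heq : ((2:ℝ)) • ((1/2 : ℝ) • a + (1/2 : ℝ) • b) = a + b := by
      rw [smul_add, smul_smul, smul_smul]; norm_num
    rwa [heq] at h2
  rw [mem_interior]
  refine ⟨ball (k + s • e) (s * r), fun w hw => ?_, isOpen_ball, mem_ball_self (by positivity)⟩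
  have hdec : w = k + s • (e + s⁻¹ • (w - k - s • e)) := by
    rw [smul_add, smul_smul, mul_inv_cancel₀ hs.ne', one_smul]; abel
  rw [hdec]
  apply hK_add _ _ hk
  apply hKcone s hs.le
  apply hball
  rw [mem_ball_iff_norm']
  have h1 : e - (e + s⁻¹ • (w - k - s • e)) = -(s⁻¹ • (w - (k + s • e))) := by
    have h2 : w - k - s • e = w - (k + s • e) := by abel
    rw [h2]; abel
  rw [h1, norm_neg, norm_smul, Real.norm_eq_abs, abs_of_pos (inv_pos.2 hs)]
  rw [mem_ball_iff_norm'] at hw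
  calc s⁻¹ * ‖w - (k + s • e)‖ < s⁻¹ * (s * r) := by
        apply mul_lt_mul_of_pos_left _ (inv_pos.2 hs)
        rw [← norm_neg]; simpa [neg_sub] using hw
    _ = r := by field_simp

/-- if H_F(x̄) = F(x̄) - K is convex and K-upper bounded and
ȳ ∈ WMax(H_F(x̄),K), then g_{u,x̄} is convex, finite and continuous on Y, and its convex
subdifferential at ȳ equals ∂Ψ_e(0) ∩ N(ȳ, H_F(x̄)). -/
theorem stmt16
    {X Y : Type*} [NormedAddCommGroup X] [NormedSpace ℝ X] [CompleteSpace X]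
    [NormedAddCommGroup Y] [NormedSpace ℝ Y] [CompleteSpace Y]
    (K : Set Y) (e : Y) (F : X → Set Y) (Ω : Set X) (xbar : X)
    (hKcl : IsClosed K) (hKcv : Convex ℝ K)
    (hKcone : ∀ t : ℝ, 0 ≤ t → ∀ y ∈ K, t • y ∈ K)
    (hKpt : K ∩ (-K) = {0})
    (he : e ∈ interior K)
    (hΩne : Ω.Nonempty) (hΩcl : IsClosed Ω)
    (hΩdom : Ω ⊆ interior {x | (F x).Nonempty})
    (hxΩ : xbar ∈ Ω)
    (ybar : Y) (hybar : ybar ∈ wMaxSet (F xbar - K) K)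
    (hHconv : Convex ℝ (F xbar - K))
    (hHub : ∃ μ > (0:ℝ), ∀ a ∈ F xbar - K, μ • e - a ∈ K) :
    Convex ℝ {p : Y × ℝ | gupp K e F xbar p.1 ≤ (p.2 : EReal)} ∧
    (∀ y : Y, gupp K e F xbar y ≠ ⊥ ∧ gupp K e F xbar y ≠ ⊤) ∧
    Continuous (gupp K e F xbar) ∧
    ({ys : Y →L[ℝ] ℝ | ∀ y : Y,
        gupp K e F xbar ybar + ((ys (y - ybar) : ℝ) : EReal) ≤ gupp K e F xbar y} =
      {ys : Y →L[ℝ] ℝ | (∀ y : Y, ys y ≤ psiE K e y) ∧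
        ∀ y ∈ F xbar - K, ys (y - ybar) ≤ 0}) := by
  have hFne : (F xbar).Nonempty := interior_subset (s := {x | (F x).Nonempty}) (hΩdom hxΩ)
  rcases subsingleton_or_nontrivial Y with hY | hY
  · -- degenerate case: Y is a subsingleton
    have hpsi : ∀ y : Y, psiE K e y = 0 := by
      intro y
      have hset : {t : ℝ | t • e - y ∈ K} = univ := by
        ext t
        simp only [mem_setOf_eq, mem_univ, iff_true]
        have : t • e - y = e := Subsingleton.elim _ _
        rw [this]; exact interior_subset he
      rw [psiE, hset]
      exact Real.sInf_of_not_bddBelow (by simpa using Real.not_bddBelow_univ)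
    have hg : ∀ y : Y, gupp K e F xbar y = 0 := by
      intro y
      obtain ⟨y0, hy0⟩ := hFne
      apply le_antisymm
      · calc gupp K e F xbar y ≤ ((psiE K e (y - y0) : ℝ) : EReal) := biInf_le _ hy0
          _ = 0 := by rw [hpsi]; exact EReal.coe_zero
      · exact le_iInf₂ fun yb hyb => by rw [hpsi]; exact le_of_eq EReal.coe_zero.symm
    refine ⟨?_, ?_, ?_, ?_⟩
    · intro p hp q hq a b ha hb hab
      simp only [mem_setOf_eq, hg] at hp hq ⊢
      have hp' : (0:ℝ) ≤ p.2 := EReal.coe_nonneg.1 hp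
      have hq' : (0:ℝ) ≤ q.2 := EReal.coe_nonneg.1 hq
      have : (0:ℝ) ≤ (a • p + b • q).2 := by
        have : (a • p + b • q).2 = a * p.2 + b * q.2 := rfl
        rw [this]
        have := mul_nonneg ha hp'
        have := mul_nonneg hb hq'
        linarith
      exact EReal.coe_nonneg.2 this
    · intro y
      rw [hg]
      exact ⟨by simp, by simp⟩
    · have : gupp K e F xbar = fun _ => 0 := funext hg
      rw [this]; exact continuous_const
    · ext ys
      simp only [mem_setOf_eq, hg]
      constructor
      · intro _
        constructor
        · intro y
          rw [hpsi, show y = 0 from Subsingleton.elim _ _, map_zero]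
        · intro y _
          rw [show y - ybar = 0 from Subsingleton.elim _ _, map_zero]
      · intro _ y
        rw [show y - ybar = 0 from Subsingleton.elim _ _, map_zero]
        simp
  · -- main case: Y nontrivial
    have hene : e ≠ 0 := by
      intro h0
      rw [h0] at he
      obtain ⟨δ, hδ, hδball⟩ := Metric.isOpen_iff.1 isOpen_interior 0 he
      obtain ⟨v, hv⟩ := exists_ne (0 : Y)
      have hvn : 0 < ‖v‖ := norm_pos_iff.2 hv
      set w := (δ / 2 / ‖v‖) • v with hwdef
      have hwn : ‖w‖ = δ / 2 := by
        rw [hwdef, norm_smul, Real.norm_eq_abs, abs_of_pos (by positivity),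
          div_mul_cancel₀ _ hvn.ne']
      have hwK : w ∈ K := interior_subset (hδball (by
        rw [mem_ball, dist_zero_right, hwn]; linarith))
      have hwK' : -w ∈ K := interior_subset (hδball (by
        rw [mem_ball, dist_zero_right, norm_neg, hwn]; linarith))
      have hmem : w ∈ K ∩ (-K) := ⟨hwK, by simpa using hwK'⟩
      rw [hKpt] at hmem
      have hw0 : w = 0 := by simpa using hmem
      rw [hwdef, smul_eq_zero] at hw0
      rcases hw0 with h | h
      · rw [div_eq_zero_iff] at h
        rcases h with h | h
        · linarith
        · exact hvn.ne' h
      · exact hv h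
    obtain ⟨r, hr, hball'⟩ := Metric.isOpen_iff.1 isOpen_interior e he
    have hball : ball e r ⊆ K := hball'.trans interior_subset
    obtain ⟨μ, hμpos, hμ⟩ := hHub
    have h0K : (0:Y) ∈ K := K_zero hKcl hKcv hKcone hKpt hr hball hene
    have hsubH : F xbar ⊆ F xbar - K := fun yb h =>
      Set.mem_sub.2 ⟨yb, h, 0, h0K, sub_zero yb⟩
    set gr : Y → ℝ := fun y => sInf ((fun yb => psiE K e (y - yb)) '' F xbar) with hgrdef
    have hlb : ∀ y : Y, ∀ t ∈ (fun yb => psiE K e (y - yb)) '' F xbar,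
        psiE K e (y - μ • e) ≤ t := by
      rintro y t ⟨yb, hyb, rfl⟩
      apply psi_mono hKcl hKcv hKcone hKpt hr hball hene
      have hK : μ • e - yb ∈ K := hμ yb (hsubH hyb)
      have heq : (y - yb) - (y - μ • e) = μ • e - yb := by abel
      rw [heq]; exact hK
    have hbdd : ∀ y : Y, BddBelow ((fun yb => psiE K e (y - yb)) '' F xbar) :=
      fun y => ⟨_, hlb y⟩
    have key : ∀ y : Y, gupp K e F xbar y = ((gr y : ℝ) : EReal) :=
      fun y => biInf_coe _ hFne (hbdd y)
    have gr_le : ∀ y : Y, ∀ a ∈ F xbar - K, gr y ≤ psiE K e (y - a) := by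
      rintro y a ha
      obtain ⟨yb, hyb, k, hk, hsub⟩ := Set.mem_sub.1 ha
      calc gr y ≤ psiE K e (y - yb) := csInf_le (hbdd y) ⟨yb, hyb, rfl⟩
        _ ≤ psiE K e (y - a) := by
            apply psi_mono hKcl hKcv hKcone hKpt hr hball hene
            have heq : (y - a) - (y - yb) = yb - a := by abel
            rw [heq, ← hsub]
            have : yb - (yb - k) = k := by abel
            rw [this]; exact hk
    have le_gr : ∀ (y : Y) (c : ℝ), (∀ yb ∈ F xbar, c ≤ psiE K e (y - yb)) → c ≤ gr y := by
      intro y c h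
      exact le_csInf (hFne.image _) (by rintro t ⟨yb, hyb, rfl⟩; exact h yb hyb)
    have gr_lt : ∀ (y : Y) (c : ℝ), gr y < c → ∃ yb ∈ F xbar, psiE K e (y - yb) < c := by
      intro y c h
      obtain ⟨t, ⟨yb, hyb, rfl⟩, ht⟩ := (csInf_lt_iff (hbdd y) (hFne.image _)).1 h
      exact ⟨yb, hyb, ht⟩
    have grconv : ∀ (y₁ y₂ : Y) (a b : ℝ), 0 ≤ a → 0 ≤ b → a + b = 1 →
        gr (a • y₁ + b • y₂) ≤ a * gr y₁ + b * gr y₂ := by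
      intro y₁ y₂ a b ha hb hab
      apply real_le_of_forall_pos
      intro ε hε
      obtain ⟨c₁, hc₁, hp₁⟩ := gr_lt y₁ (gr y₁ + ε) (by linarith)
      obtain ⟨c₂, hc₂, hp₂⟩ := gr_lt y₂ (gr y₂ + ε) (by linarith)
      have hmem : a • c₁ + b • c₂ ∈ F xbar - K := hHconv (hsubH hc₁) (hsubH hc₂) ha hb hab
      have h1 : gr (a • y₁ + b • y₂) ≤ psiE K e ((a • y₁ + b • y₂) - (a • c₁ + b • c₂)) :=
        gr_le _ _ hmem
      have heq : (a • y₁ + b • y₂) - (a • c₁ + b • c₂) = a • (y₁ - c₁) + b • (y₂ - c₂) := by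
        rw [smul_sub, smul_sub]; abel
      rw [heq] at h1
      have h2 := psi_combo hKcl hKcv hKcone hKpt hr hball hene
        (y₁ := y₁ - c₁) (y₂ := y₂ - c₂) ha hb hab
      have h3 : a * psiE K e (y₁ - c₁) ≤ a * (gr y₁ + ε) :=
        mul_le_mul_of_nonneg_left hp₁.le ha
      have h4 : b * psiE K e (y₂ - c₂) ≤ b * (gr y₂ + ε) :=
        mul_le_mul_of_nonneg_left hp₂.le hb
      have hsum : a * (gr y₁ + ε) + b * (gr y₂ + ε) = a * gr y₁ + b * gr y₂ + (a + b) * ε := by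
        ring
      rw [hab, one_mul] at hsum
      linarith
    refine ⟨?_, ?_, ?_, ?_⟩
    · -- convexity of the epigraph-type set
      intro p hp q hq a b ha hb hab
      simp only [mem_setOf_eq, key] at hp hq ⊢
      rw [EReal.coe_le_coe_iff] at hp hq ⊢
      have h1 : (a • p + b • q).1 = a • p.1 + b • q.1 := rfl
      have h2 : (a • p + b • q).2 = a * p.2 + b * q.2 := rfl
      rw [h1, h2]
      calc gr (a • p.1 + b • q.1) ≤ a * gr p.1 + b * gr q.1 := grconv _ _ _ _ ha hb hab
        _ ≤ a * p.2 + b * q.2 :=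
            add_le_add (mul_le_mul_of_nonneg_left hp ha) (mul_le_mul_of_nonneg_left hq hb)
    · intro y
      rw [key]
      exact ⟨EReal.coe_ne_bot _, EReal.coe_ne_top _⟩
    · -- continuity
      have key2 : ∀ z z' : Y, gr z' ≤ gr z + ‖z' - z‖ / r := by
        intro z z'
        have hstep : ∀ yb ∈ F xbar, gr z' - ‖z' - z‖ / r ≤ psiE K e (z - yb) := by
          intro yb hyb
          have h1 : gr z' ≤ psiE K e (z' - yb) := csInf_le (hbdd z') ⟨yb, hyb, rfl⟩
          have h2 := psi_sub_le hKcl hKcv hKcone hKpt hr hball hene (z - yb) (z' - yb)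
          have heq : (z' - yb) - (z - yb) = z' - z := by abel
          rw [heq] at h2
          linarith
        have := le_gr z _ hstep
        linarith
      have hgrcont : Continuous gr := by
        have hlip : LipschitzWith (Real.toNNReal r⁻¹) gr := by
          apply LipschitzWith.of_dist_le_mul
          intro y y'
          rw [Real.dist_eq, dist_eq_norm, Real.coe_toNNReal _ (inv_nonneg.2 hr.le)]
          rw [abs_sub_le_iff]
          constructor
          · have h := key2 y' y
            rw [inv_mul_eq_div]
            linarith
          · have h := key2 y y'
            have hn : ‖y' - y‖ = ‖y - y'‖ := norm_sub_rev _ _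
            rw [hn] at h
            rw [inv_mul_eq_div]
            linarith
        exact hlip.continuous
      have hfun : gupp K e F xbar = fun y => ((gr y : ℝ) : EReal) := funext key
      rw [hfun]
      exact continuous_coe_real_ereal.comp hgrcont
    · -- the subdifferential formula
      have hgrybar : gr ybar = 0 := by
        apply le_antisymm
        · have h := gr_le ybar ybar hybar.1
          rw [sub_self, psi_zero hKcl hKcv hKcone hKpt hr hball hene] at h
          exact h
        · apply le_gr
          intro yb hyb
          by_contra hneg
          push_neg at hneg
          have hm := psi_mem hKcl hKcv hKcone hKpt hr hball hene (ybar - yb)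
          have hint : yb - ybar ∈ interior K := by
            have h := add_smul_mem_interior hKcv hKcone hr hball hm
              (s := -(psiE K e (ybar - yb))) (by linarith)
            have heq : psiE K e (ybar - yb) • e - (ybar - yb)
                + (-(psiE K e (ybar - yb))) • e = yb - ybar := by
              rw [neg_smul]; abel
            rwa [heq] at h
          exact hybar.2 yb (hsubH hyb) hint
      ext ys
      simp only [mem_setOf_eq, key, hgrybar]
      constructor
      · intro h
        have h' : ∀ y : Y, (ys (y - ybar) : ℝ) ≤ gr y := by
          intro y
          have hy := h y
          have : ((0:ℝ) : EReal) + ((ys (y - ybar) : ℝ) : EReal)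
              = (((0:ℝ) + ys (y - ybar) : ℝ) : EReal) := by
            rw [EReal.coe_add]
          rw [this] at hy
          rw [EReal.coe_le_coe_iff] at hy
          linarith
        constructor
        · intro y
          have h1 := h' (y + ybar)
          rw [add_sub_cancel_right] at h1
          have h2 := gr_le (y + ybar) ybar hybar.1
          rw [add_sub_cancel_right] at h2
          linarith
        · intro a ha
          have h1 := h' a
          have h2 := gr_le a a ha
          rw [sub_self, psi_zero hKcl hKcv hKcone hKpt hr hball hene] at h2
          linarith
      · rintro ⟨h1, h2⟩ y
        have hle : (ys (y - ybar) : ℝ) ≤ gr y := by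
          apply le_gr
          intro yb hyb
          have e1 : ys (y - ybar) = ys (y - yb) + ys (yb - ybar) := by
            rw [← map_add]
            congr 1
            abel
          have ha := h1 (y - yb)
          have hb := h2 yb (hsubH hyb)
          rw [e1]
          linarith
        have : ((0:ℝ) : EReal) + ((ys (y - ybar) : ℝ) : EReal)
            = (((0:ℝ) + ys (y - ybar) : ℝ) : EReal) := by rw [EReal.coe_add]
        rw [this, EReal.coe_le_coe_iff]
        linarith
end

section
/- Suppose Ω is convex and x̄ is a local ⪯ʳ_K-weakly minimal solution of the set optimization problem min_{x∈Ω} F(x) for r ∈ {l,u}. If r = l and F is ⪯ˡ_K-convex, then x̄ is a global ⪯ˡ_K-weakly minimal solution. If r = u, F is ⪯ᵘ_K-convex and H_F(x̄) := F(x̄) − K is convex, then x̄ is a global ⪯ᵘ_K-weakly minimal solution. -/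
open Set Topology Metric Pointwise

/-- under convexity of Ω and of F (in the corresponding set-relation sense),
local ⪯ʳ_K-weakly minimal solutions of the set optimization problem are global ones.
Here F(x) ≺ˡ_K F(x̄) means F(x̄) ⊆ F(x) + int K, and F(x) ≺ᵘ_K F(x̄) means
F(x) ⊆ F(x̄) - int K. -/
theorem stmt17
    {X Y : Type*} [NormedAddCommGroup X] [NormedSpace ℝ X] [CompleteSpace X]
    [NormedAddCommGroup Y] [NormedSpace ℝ Y] [CompleteSpace Y]
    (K : Set Y) (e : Y) (F : X → Set Y) (Ω : Set X) (xbar : X)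
    (hKcl : IsClosed K) (hKcv : Convex ℝ K)
    (hKcone : ∀ t : ℝ, 0 ≤ t → ∀ y ∈ K, t • y ∈ K)
    (hKpt : K ∩ (-K) = {0})
    (he : e ∈ interior K)
    (hΩne : Ω.Nonempty) (hΩcl : IsClosed Ω)
    (hΩdom : Ω ⊆ interior {x | (F x).Nonempty})
    (hxΩ : xbar ∈ Ω)
    (hΩconv : Convex ℝ Ω) :
    ((∀ x₁ x₂ : X, (F x₁).Nonempty → (F x₂).Nonempty → ∀ t : ℝ, t ∈ Set.Ioo (0:ℝ) 1 →
        t • F x₁ + (1 - t) • F x₂ ⊆ F (t • x₁ + (1 - t) • x₂) + K) →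
      (∃ U ∈ 𝓝 xbar, ∀ x ∈ Ω ∩ U, x ≠ xbar → ¬ (F xbar ⊆ F x + interior K)) →
      ∀ x ∈ Ω, x ≠ xbar → ¬ (F xbar ⊆ F x + interior K)) ∧
    ((∀ x₁ x₂ : X, (F x₁).Nonempty → (F x₂).Nonempty → ∀ t : ℝ, t ∈ Set.Ioo (0:ℝ) 1 →
        F (t • x₁ + (1 - t) • x₂) ⊆ (t • F x₁ + (1 - t) • F x₂) - K) →
      Convex ℝ (F xbar - K) →
      (∃ U ∈ 𝓝 xbar, ∀ x ∈ Ω ∩ U, x ≠ xbar → ¬ (F x ⊆ F xbar - interior K)) →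
      ∀ x ∈ Ω, x ≠ xbar → ¬ (F x ⊆ F xbar - interior K)) := by

  have hdom : ∀ x ∈ Ω, (F x).Nonempty := by
    intro x hx
    have h2 : x ∈ {x | (F x).Nonempty} := interior_subset (hΩdom hx)
    exact h2
  have h0K : (0 : Y) ∈ K := by
    have := hKcone 0 le_rfl e (interior_subset he)
    simpa using this
  have haddK : ∀ a ∈ K, ∀ b ∈ K, a + b ∈ K := by
    intro a ha b hb
    have h2 := hKcone 2 (by norm_num) _
      (hKcv ha hb (by norm_num : (0:ℝ) ≤ 1/2) (by norm_num : (0:ℝ) ≤ 1/2) (by norm_num))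
    have heq : (2:ℝ) • ((1/2 : ℝ) • a + (1/2 : ℝ) • b) = a + b := by module
    rwa [heq] at h2
  have haddInt : ∀ a ∈ K, ∀ u ∈ interior K, a + u ∈ interior K := by
    intro a ha u hu
    rw [mem_interior] at hu ⊢
    obtain ⟨V, hVK, hVo, huV⟩ := hu
    refine ⟨(a + ·) '' V, ?_, isOpenMap_add_left a V hVo, ⟨u, huV, rfl⟩⟩
    rintro _ ⟨y, hy, rfl⟩
    exact haddK a ha y (hVK hy)
  have hsmulInt : ∀ t : ℝ, 0 < t → ∀ u ∈ interior K, t • u ∈ interior K := by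
    intro t ht u hu
    have h1 : t • u ∈ t • interior K := smul_mem_smul_set hu
    rw [← interior_smul₀ ht.ne' K] at h1
    refine interior_mono ?_ h1
    rintro _ ⟨z, hz, rfl⟩
    exact hKcone t ht.le z hz
  have hpick : ∀ x : X, x ≠ xbar → ∀ U ∈ 𝓝 xbar,
      ∃ t : ℝ, t ∈ Set.Ioo (0:ℝ) 1 ∧ t • x + (1 - t) • xbar ∈ U := by
    intro x hx U hU
    obtain ⟨ε, hε, hball⟩ := Metric.mem_nhds_iff.mp hU
    have hc : 0 < ‖x - xbar‖ := norm_pos_iff.mpr (sub_ne_zero.mpr hx)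
    set c := ‖x - xbar‖ with hcdef
    refine ⟨min (1/2) (ε / (2 * c)), ⟨lt_min (by norm_num) (by positivity),
      lt_of_le_of_lt (min_le_left _ _) (by norm_num)⟩, ?_⟩
    set t := min (1/2) (ε / (2 * c)) with htdef
    have ht0 : 0 < t := lt_min (by norm_num) (by positivity)
    apply hball
    rw [Metric.mem_ball, dist_eq_norm]
    have heq : t • x + (1 - t) • xbar - xbar = t • (x - xbar) := by module
    rw [heq, norm_smul, Real.norm_eq_abs, abs_of_pos ht0, ← hcdef]
    have hle : t ≤ ε / (2 * c) := min_le_right _ _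
    calc t * c ≤ (ε / (2 * c)) * c := by nlinarith
    _ = ε / 2 := by field_simp
    _ < ε := by linarith
  constructor
  · intro hconv hloc x hx hne hsub
    obtain ⟨U, hU, hlocmin⟩ := hloc
    obtain ⟨t, ⟨ht0, ht1⟩, htU⟩ := hpick x hne U hU
    set xt := t • x + (1 - t) • xbar with hxt
    have hxtΩ : xt ∈ Ω := hΩconv hx hxΩ ht0.le (by linarith) (by ring)
    have hxtne : xt ≠ xbar := by
      intro h
      apply hne
      have h2 : t • (x - xbar) = 0 := by
        have : t • x + (1 - t) • xbar - xbar = 0 := by rw [← hxt, h, sub_self]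
        calc t • (x - xbar) = t • x + (1 - t) • xbar - xbar := by module
        _ = 0 := this
      have := smul_eq_zero.mp h2
      rcases this with h3 | h3
      · exact absurd h3 ht0.ne'
      · exact sub_eq_zero.mp h3
    refine hlocmin xt ⟨hxtΩ, htU⟩ hxtne ?_
    intro yb hyb
    obtain ⟨y, hy, k, hk, hyk⟩ := Set.mem_add.mp (hsub hyb)
    have hmem : t • y + (1 - t) • yb ∈ t • F x + (1 - t) • F xbar :=
      Set.add_mem_add (smul_mem_smul_set hy) (smul_mem_smul_set hyb)
    obtain ⟨z, hz, k', hk', heq⟩ := Set.mem_add.mp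
      (hconv x xbar (hdom x hx) (hdom xbar hxΩ) t ⟨ht0, ht1⟩ hmem)
    refine Set.mem_add.mpr ⟨z, hz, k' + t • k, haddInt k' hk' _ (hsmulInt t ht0 k hk), ?_⟩
    calc z + (k' + t • k) = (z + k') + t • k := by abel
    _ = (t • y + (1 - t) • yb) + t • k := by rw [heq]
    _ = yb := by rw [← hyk]; module
  · intro hconv hHconv hloc x hx hne hsub
    obtain ⟨U, hU, hlocmin⟩ := hloc
    obtain ⟨t, ⟨ht0, ht1⟩, htU⟩ := hpick x hne U hU
    set xt := t • x + (1 - t) • xbar with hxt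
    have hxtΩ : xt ∈ Ω := hΩconv hx hxΩ ht0.le (by linarith) (by ring)
    have hxtne : xt ≠ xbar := by
      intro h
      apply hne
      have h2 : t • (x - xbar) = 0 := by
        have : t • x + (1 - t) • xbar - xbar = 0 := by rw [← hxt, h, sub_self]
        calc t • (x - xbar) = t • x + (1 - t) • xbar - xbar := by module
        _ = 0 := this
      rcases smul_eq_zero.mp h2 with h3 | h3
      · exact absurd h3 ht0.ne'
      · exact sub_eq_zero.mp h3
    refine hlocmin xt ⟨hxtΩ, htU⟩ hxtne ?_
    intro z hz
    obtain ⟨w, hw, k, hk, hwk⟩ := Set.mem_sub.mp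
      (hconv x xbar (hdom x hx) (hdom xbar hxΩ) t ⟨ht0, ht1⟩ hz)
    obtain ⟨y1, hy1, y2, hy2, hw12⟩ := Set.mem_add.mp hw
    obtain ⟨y, hy, rfl⟩ := hy1
    obtain ⟨yb, hyb, rfl⟩ := hy2
    obtain ⟨v, hv, u, hu, hvu⟩ := Set.mem_sub.mp (hsub hy)
    have hvH : v ∈ F xbar - K := ⟨v, hv, 0, h0K, sub_zero v⟩
    have hybH : yb ∈ F xbar - K := ⟨yb, hyb, 0, h0K, sub_zero yb⟩
    obtain ⟨p, hp, q, hq, hpq⟩ := Set.mem_sub.mp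
      (hHconv (a := t) (b := 1 - t) hvH hybH ht0.le (by linarith) (by ring))
    have hintmem : q + t • u + k ∈ interior K := by
      have h1 : q + t • u ∈ interior K := haddInt q hq _ (hsmulInt t ht0 u hu)
      have h2 := haddInt k hk _ h1
      rwa [add_comm k (q + t • u)] at h2
    refine Set.mem_sub.mpr ⟨p, hp, q + t • u + k, hintmem, ?_⟩
    calc p - (q + t • u + k) = (p - q) - t • u - k := by abel
    _ = (t • v + (1 - t) • yb) - t • u - k := by rw [hpq]
    _ = t • (v - u) + (1 - t) • yb - k := by module
    _ = t • y + (1 - t) • yb - k := by rw [hvu]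
    _ = w - k := by rw [hw12]
    _ = z := hwk
end

section
/- Let r ∈ {l,u}. If x̄ is a local ⪯ʳ_K-weakly minimal solution of the set optimization problem min_{x∈Ω} F(x), then x̄ is a local solution of the scalar problem min_{x∈Ω} f_{r,x̄}(x), i.e., there is a neighborhood U of x̄ with f_{r,x̄}(x̄) ≤ f_{r,x̄}(x) for all x ∈ Ω ∩ U. -/
open Set Topology Metric Pointwise

section Aux

variable {Y : Type*} [NormedAddCommGroup Y] [NormedSpace ℝ Y]

lemma aux_add_K {K : Set Y} (hKcv : Convex ℝ K)
    (hKcone : ∀ t : ℝ, 0 ≤ t → ∀ y ∈ K, t • y ∈ K)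
    {k1 k2 : Y} (h1 : k1 ∈ K) (h2 : k2 ∈ K) : k1 + k2 ∈ K := by
  have hm : (1/2 : ℝ) • k1 + (1/2 : ℝ) • k2 ∈ K :=
    hKcv h1 h2 (by norm_num) (by norm_num) (by norm_num)
  have := hKcone 2 (by norm_num) _ hm
  simpa [smul_add, smul_smul] using this

lemma aux_int_add {K : Set Y} (hKcv : Convex ℝ K)
    (hKcone : ∀ t : ℝ, 0 ≤ t → ∀ y ∈ K, t • y ∈ K)
    {a b : Y} (ha : a ∈ interior K) (hb : b ∈ K) : a + b ∈ interior K := by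
  rw [mem_interior_iff_mem_nhds, Metric.mem_nhds_iff] at ha ⊢
  obtain ⟨ε, hε, hball⟩ := ha
  refine ⟨ε, hε, fun z hz => ?_⟩
  have hz' : z - b ∈ Metric.ball a ε := by
    simp only [Metric.mem_ball, dist_eq_norm] at hz ⊢
    have : z - b - a = z - (a + b) := by abel
    rw [this]; exact hz
  have hzK : z - b ∈ K := hball hz'
  have := aux_add_K hKcv hKcone hzK hb
  simpa using this

lemma aux_int_smul {K : Set Y}
    (hKcone : ∀ t : ℝ, 0 ≤ t → ∀ y ∈ K, t • y ∈ K)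
    {t : ℝ} (ht : 0 < t) {a : Y} (ha : a ∈ interior K) : t • a ∈ interior K := by
  have h1 : t • a ∈ t • interior K := Set.smul_mem_smul_set ha
  rw [← interior_smul₀ (ne_of_gt ht)] at h1
  refine interior_mono ?_ h1
  rintro _ ⟨z, hz, rfl⟩
  exact hKcone t ht.le z hz

lemma aux_psiE_zero_nonpos {K : Set Y} {e : Y} (h0 : (0 : Y) ∈ K) :
    psiE K e 0 ≤ 0 := by
  unfold psiE
  by_cases hb : BddBelow {t : ℝ | t • e - 0 ∈ K}
  · exact csInf_le hb (by simpa using h0)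
  · rw [Real.sInf_of_not_bddBelow hb]

lemma aux_psiE_neg {K : Set Y} {e w : Y} (h : psiE K e w < 0) :
    ∃ t : ℝ, t < 0 ∧ t • e - w ∈ K := by
  by_contra hc
  push_neg at hc
  have : 0 ≤ psiE K e w := Real.sInf_nonneg (fun t ht => by
    by_contra h'
    push_neg at h'
    exact hc t h' ht)
  exact absurd h (not_lt.mpr this)

end Aux

section Aux2

variable {X Y : Type*} [NormedAddCommGroup X] [NormedSpace ℝ X]
  [NormedAddCommGroup Y] [NormedSpace ℝ Y]

lemma aux_flow_self_nonpos {K : Set Y} {e : Y} {F : X → Set Y} {xbar : X}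
    (h0 : (0 : Y) ∈ K) : flow K e F xbar xbar ≤ 0 := by
  rw [flow]
  refine iSup₂_le fun yb hyb => ?_
  rw [glow]
  refine (iInf₂_le yb hyb).trans ?_
  rw [sub_self]
  exact_mod_cast aux_psiE_zero_nonpos h0

lemma aux_fupp_self_nonpos {K : Set Y} {e : Y} {F : X → Set Y} {xbar : X}
    (h0 : (0 : Y) ∈ K) : fupp K e F xbar xbar ≤ 0 := by
  rw [fupp]
  refine iSup₂_le fun y hy => ?_
  rw [gupp]
  refine (iInf₂_le y hy).trans ?_
  rw [sub_self]
  exact_mod_cast aux_psiE_zero_nonpos h0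

lemma aux_flow_neg_subset {K : Set Y} {e : Y} {F : X → Set Y} {xbar x : X}
    (hKcv : Convex ℝ K) (hKcone : ∀ t : ℝ, 0 ≤ t → ∀ y ∈ K, t • y ∈ K)
    (he : e ∈ interior K)
    (hx : flow K e F xbar x < 0) : F xbar ⊆ F x + interior K := by
  intro yb hyb
  have hg : glow K e F x yb < 0 :=
    lt_of_le_of_lt (le_iSup₂ (f := fun yb _ => glow K e F x yb) yb hyb) hx
  rw [glow] at hg
  simp only [iInf_lt_iff] at hg
  obtain ⟨y, hy, hlt⟩ := hg
  have hlt' : psiE K e (y - yb) < 0 := by exact_mod_cast hlt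
  obtain ⟨t, ht, htK⟩ := aux_psiE_neg hlt'
  have hint : (-t) • e + (t • e - (y - yb)) ∈ interior K :=
    aux_int_add hKcv hKcone (aux_int_smul hKcone (by linarith) he) htK
  refine ⟨y, hy, (-t) • e + (t • e - (y - yb)), hint, ?_⟩
  module

lemma aux_fupp_neg_subset {K : Set Y} {e : Y} {F : X → Set Y} {xbar x : X}
    (hKcv : Convex ℝ K) (hKcone : ∀ t : ℝ, 0 ≤ t → ∀ y ∈ K, t • y ∈ K)
    (he : e ∈ interior K)
    (hx : fupp K e F xbar x < 0) : F x ⊆ F xbar - interior K := by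
  intro y hy
  have hg : gupp K e F xbar y < 0 :=
    lt_of_le_of_lt (le_iSup₂ (f := fun y _ => gupp K e F xbar y) y hy) hx
  rw [gupp] at hg
  simp only [iInf_lt_iff] at hg
  obtain ⟨yb, hyb, hlt⟩ := hg
  have hlt' : psiE K e (y - yb) < 0 := by exact_mod_cast hlt
  obtain ⟨t, ht, htK⟩ := aux_psiE_neg hlt'
  have hint : (-t) • e + (t • e - (y - yb)) ∈ interior K :=
    aux_int_add hKcv hKcone (aux_int_smul hKcone (by linarith) he) htK
  refine ⟨yb, hyb, (-t) • e + (t • e - (y - yb)), hint, ?_⟩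
  module

end Aux2

/-- if x̄ is a local ⪯ʳ_K-weakly minimal solution of the set optimization
problem (r ∈ {l,u}), then x̄ is a local solution of the scalar problem min_{x ∈ Ω} f_{r,x̄}. -/
theorem stmt18
    {X Y : Type*} [NormedAddCommGroup X] [NormedSpace ℝ X] [CompleteSpace X]
    [NormedAddCommGroup Y] [NormedSpace ℝ Y] [CompleteSpace Y]
    (K : Set Y) (e : Y) (F : X → Set Y) (Ω : Set X) (xbar : X)
    (hKcl : IsClosed K) (hKcv : Convex ℝ K)
    (hKcone : ∀ t : ℝ, 0 ≤ t → ∀ y ∈ K, t • y ∈ K)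
    (hKpt : K ∩ (-K) = {0})
    (he : e ∈ interior K)
    (hΩne : Ω.Nonempty) (hΩcl : IsClosed Ω)
    (hΩdom : Ω ⊆ interior {x | (F x).Nonempty})
    (hxΩ : xbar ∈ Ω) :
    ((∃ U ∈ 𝓝 xbar, ∀ x ∈ Ω ∩ U, x ≠ xbar → ¬ (F xbar ⊆ F x + interior K)) →
      ∃ U ∈ 𝓝 xbar, ∀ x ∈ Ω ∩ U, flow K e F xbar xbar ≤ flow K e F xbar x) ∧
    ((∃ U ∈ 𝓝 xbar, ∀ x ∈ Ω ∩ U, x ≠ xbar → ¬ (F x ⊆ F xbar - interior K)) →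
      ∃ U ∈ 𝓝 xbar, ∀ x ∈ Ω ∩ U, fupp K e F xbar xbar ≤ fupp K e F xbar x) := by
  have h0K : (0 : Y) ∈ K := by
    have := hKcone 0 le_rfl e (interior_subset he)
    simpa using this
  constructor
  · rintro ⟨U, hU, hmin⟩
    refine ⟨U, hU, fun x hx => ?_⟩
    by_cases hxx : x = xbar
    · subst hxx; exact le_rfl
    · have h1 : ¬ flow K e F xbar x < 0 := fun hlt =>
        hmin x hx hxx (aux_flow_neg_subset hKcv hKcone he hlt)
      exact (aux_flow_self_nonpos h0K).trans (not_lt.mp h1)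
  · rintro ⟨U, hU, hmin⟩
    refine ⟨U, hU, fun x hx => ?_⟩
    by_cases hxx : x = xbar
    · subst hxx; exact le_rfl
    · have h1 : ¬ fupp K e F xbar x < 0 := fun hlt =>
        hmin x hx hxx (aux_fupp_neg_subset hKcv hKcone he hlt)
      exact (aux_fupp_self_nonpos h0K).trans (not_lt.mp h1)
end

section
/- Let r ∈ {l,u}. Suppose x̄ is a local strict solution of the scalar problem min_{x∈Ω} f_{r,x̄}(x), i.e., there is a neighborhood U of x̄ with f_{r,x̄}(x̄) < f_{r,x̄}(x) for all x ∈ (Ω ∩ U) \ {x̄}, and suppose either r = l and WMin(F(x̄),K) ≠ ∅, or r = u and WMax(F(x̄),K) ≠ ∅. Then x̄ is a local ⪯ʳ_K-strictly minimal solution of the set optimization problem min_{x∈Ω} F(x), i.e., there is a neighborhood U' of x̄ with no x ∈ (Ω ∩ U') \ {x̄} satisfying F(x) ⪯ʳ_K F(x̄). -/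
open Set Topology Metric Pointwise

lemma psi_nonpos {Y : Type*} [NormedAddCommGroup Y] [NormedSpace ℝ Y]
    (K : Set Y) (e : Y) {z : Y} (hz : -z ∈ K) : psiE K e z ≤ 0 := by
  have h0 : (0:ℝ) ∈ {t : ℝ | t • e - z ∈ K} := by
    simp only [mem_setOf_eq, zero_smul, zero_sub]; exact hz
  by_cases hb : BddBelow {t : ℝ | t • e - z ∈ K}
  · exact csInf_le hb h0
  · simp [psiE, Real.sInf_of_not_bddBelow hb]

lemma psi_nonneg {Y : Type*} [NormedAddCommGroup Y] [NormedSpace ℝ Y]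
    (K : Set Y) (e : Y) (hKcv : Convex ℝ K)
    (hKcone : ∀ t : ℝ, 0 ≤ t → ∀ y ∈ K, t • y ∈ K)
    (he : e ∈ interior K) {z : Y} (hz : -z ∉ interior K) : 0 ≤ psiE K e z := by
  have hadd : ∀ a ∈ K, ∀ b ∈ K, a + b ∈ K := by
    intro a ha b hb
    have h2 : ((1:ℝ)/2) • a + ((1:ℝ)/2) • b ∈ K := hKcv ha hb (by norm_num) (by norm_num) (by norm_num)
    have := hKcone 2 (by norm_num) _ h2
    simpa [smul_add, smul_smul] using this
  have haddint : ∀ u ∈ interior K, ∀ k ∈ K, u + k ∈ interior K := by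
    intro u hu k hk
    have hopen : IsOpen (interior K + ({k} : Set Y)) := isOpen_interior.add_right
    have hsub : interior K + ({k} : Set Y) ⊆ K := by
      rintro _ ⟨a, ha, b, hb, rfl⟩
      rcases hb with rfl
      exact hadd a (interior_subset ha) b hk
    exact interior_maximal hsub hopen (Set.add_mem_add hu (mem_singleton k))
  have hsmul : ∀ c : ℝ, 0 < c → c • e ∈ interior K := by
    intro c hc
    have h1 : c • e ∈ c • interior K := smul_mem_smul_set he
    rw [← interior_smul₀ (ne_of_gt hc)] at h1
    refine interior_mono ?_ h1
    rintro y ⟨a, ha, rfl⟩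
    exact hKcone c hc.le a ha
  apply Real.sInf_nonneg
  intro t ht
  by_contra hlt
  push_neg at hlt
  have : (-t) • e + (t • e - z) ∈ interior K :=
    haddint _ (hsmul (-t) (by linarith)) _ ht
  apply hz
  have heq : (-t) • e + (t • e - z) = -z := by
    rw [neg_smul]; abel
  rwa [heq] at this

/-- if x̄ is a local strict solution of the scalar problem min_{x ∈ Ω} f_{r,x̄}
and WMin(F(x̄),K) ≠ ∅ (for r = l), resp. WMax(F(x̄),K) ≠ ∅ (for r = u), then x̄ is a local
⪯ʳ_K-strictly minimal solution of the set optimization problem. Here F(x) ⪯ˡ_K F(x̄) means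
F(x̄) ⊆ F(x) + K and F(x) ⪯ᵘ_K F(x̄) means F(x) ⊆ F(x̄) - K. -/
theorem stmt19
    {X Y : Type*} [NormedAddCommGroup X] [NormedSpace ℝ X] [CompleteSpace X]
    [NormedAddCommGroup Y] [NormedSpace ℝ Y] [CompleteSpace Y]
    (K : Set Y) (e : Y) (F : X → Set Y) (Ω : Set X) (xbar : X)
    (hKcl : IsClosed K) (hKcv : Convex ℝ K)
    (hKcone : ∀ t : ℝ, 0 ≤ t → ∀ y ∈ K, t • y ∈ K)
    (hKpt : K ∩ (-K) = {0})
    (he : e ∈ interior K)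
    (hΩne : Ω.Nonempty) (hΩcl : IsClosed Ω)
    (hΩdom : Ω ⊆ interior {x | (F x).Nonempty})
    (hxΩ : xbar ∈ Ω) :
    ((wMinSet (F xbar) K).Nonempty →
      (∃ U ∈ 𝓝 xbar, ∀ x ∈ Ω ∩ U, x ≠ xbar → flow K e F xbar xbar < flow K e F xbar x) →
      ∃ U' ∈ 𝓝 xbar, ∀ x ∈ Ω ∩ U', x ≠ xbar → ¬ (F xbar ⊆ F x + K)) ∧
    ((wMaxSet (F xbar) K).Nonempty →
      (∃ U ∈ 𝓝 xbar, ∀ x ∈ Ω ∩ U, x ≠ xbar → fupp K e F xbar xbar < fupp K e F xbar x) →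
      ∃ U' ∈ 𝓝 xbar, ∀ x ∈ Ω ∩ U', x ≠ xbar → ¬ (F x ⊆ F xbar - K)) := by
  constructor
  · rintro ⟨y0, hy0F, hy0min⟩ ⟨U, hU, hstrict⟩
    refine ⟨U, hU, fun x hx hne hsub => ?_⟩
    have hlt := hstrict x hx hne
    have h1 : flow K e F xbar x ≤ (0 : EReal) := by
      apply iSup₂_le
      intro yb hyb
      obtain ⟨y, hy, k, hk, rfl⟩ := hsub hyb
      refine iInf₂_le_of_le y hy ?_
      have hψ : psiE K e (y - (y + k)) ≤ 0 := by
        apply psi_nonpos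
        have : -(y - (y + k)) = k := by abel
        rwa [this]
      exact_mod_cast hψ
    have h2 : (0 : EReal) ≤ flow K e F xbar xbar := by
      refine le_trans ?_ (le_iSup₂ (f := fun yb _ => glow K e F xbar yb) y0 hy0F)
      apply le_iInf₂
      intro y hy
      have hψ : 0 ≤ psiE K e (y - y0) := by
        apply psi_nonneg K e hKcv hKcone he
        have : -(y - y0) = y0 - y := by abel
        rw [this]
        exact hy0min y hy
      exact_mod_cast hψ
    exact absurd hlt (not_lt.mpr (h1.trans h2))
  · rintro ⟨y0, hy0F, hy0max⟩ ⟨U, hU, hstrict⟩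
    refine ⟨U, hU, fun x hx hne hsub => ?_⟩
    have hlt := hstrict x hx hne
    have h1 : fupp K e F xbar x ≤ (0 : EReal) := by
      apply iSup₂_le
      intro y hy
      obtain ⟨a, ha, k, hk, rfl⟩ := hsub hy
      refine iInf₂_le_of_le a ha ?_
      have hψ : psiE K e (a - k - a) ≤ 0 := by
        apply psi_nonpos
        have : -(a - k - a) = k := by abel
        rwa [this]
      exact_mod_cast hψ
    have h2 : (0 : EReal) ≤ fupp K e F xbar xbar := by
      refine le_trans ?_ (le_iSup₂ (f := fun y _ => gupp K e F xbar y) y0 hy0F)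
      apply le_iInf₂
      intro yb hyb
      have hψ : 0 ≤ psiE K e (y0 - yb) := by
        apply psi_nonneg K e hKcv hKcone he
        have : -(y0 - yb) = yb - y0 := by abel
        rw [this]
        exact hy0max yb hyb
      exact_mod_cast hψ
    exact absurd hlt (not_lt.mpr (h1.trans h2))
end
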